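/- (Classical Stampacchia lemma, case β = 1.) Let x₀ ∈ ℝ and let f : [x₀, ∞) → [0, ∞) be a nonincreasing function satisfying f(y) ≤ C (y − x)^{−α} f(x) whenever y > x ≥ x₀, where C > 0 and α > 0 are constants. Then f(y) ≤ e^{1 − ζ(y − x₀)} f(x₀) for all y ≥ x₀, where ζ := (eC)^{−1/α}. -/

import Mathlib

/-- Classical Stampacchia lemma, case `β = 1`: if `f : [x₀,∞) → [0,∞)` is
nonincreasing and `f(y) ≤ C (y-x)^{-α} f(x)` for all `y > x ≥ x₀`, then
`f(y) ≤ e^{1 - ζ (y - x₀)} f(x₀)` for all `y ≥ x₀`, where `ζ = (eC)^{-1/α}`. -/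
theorem stmt_10 (x₀ C α : ℝ) (hC : 0 < C) (hα : 0 < α)
    (f : ℝ → ℝ) (hf0 : ∀ x, x₀ ≤ x → 0 ≤ f x)
    (hmono : AntitoneOn f (Set.Ici x₀))
    (hrec : ∀ x y, x₀ ≤ x → x < y → f y ≤ C / (y - x) ^ α * f x) :
    ∀ y, x₀ ≤ y →
      f y ≤ Real.exp (1 - (Real.exp 1 * C) ^ (-(1 / α)) * (y - x₀)) * f x₀ := by
  intro y hy
  set E := Real.exp 1 * C with hE
  have hEpos : 0 < E := mul_pos (Real.exp_pos 1) hC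
  set h := E ^ (1 / α) with hh
  have hhpos : 0 < h := Real.rpow_pos_of_pos hEpos _
  have hhα : h ^ α = E := by
    rw [hh, ← Real.rpow_mul hEpos.le, one_div, inv_mul_cancel₀ hα.ne', Real.rpow_one]
  have hzeta : E ^ (-(1 / α)) = h⁻¹ := by
    rw [Real.rpow_neg hEpos.le, hh]
  have key : ∀ n : ℕ, f (x₀ + n * h) ≤ Real.exp (-(n : ℝ)) * f x₀ := by
    intro n
    induction n with
    | zero => simp
    | succ n ih =>
      have hx : x₀ ≤ x₀ + n * h := le_add_of_nonneg_right (by positivity)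
      have hlt : x₀ + (n : ℝ) * h < x₀ + ((n : ℕ) + 1 : ℕ) * h := by
        push_cast; nlinarith
      have h1 := hrec _ _ hx hlt
      have hdiff : (x₀ + ((n : ℕ) + 1 : ℕ) * h) - (x₀ + (n : ℝ) * h) = h := by
        push_cast; ring
      rw [hdiff, hhα] at h1
      have hCE : C / E = Real.exp (-1) := by
        rw [hE, Real.exp_neg]
        field_simp
      rw [hCE] at h1
      calc f (x₀ + ((n : ℕ) + 1 : ℕ) * h) ≤ Real.exp (-1) * f (x₀ + n * h) := h1
        _ ≤ Real.exp (-1) * (Real.exp (-(n : ℝ)) * f x₀) := by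
            exact mul_le_mul_of_nonneg_left ih (Real.exp_pos _).le
        _ = Real.exp (-(((n : ℕ) + 1 : ℕ) : ℝ)) * f x₀ := by
            rw [← mul_assoc, ← Real.exp_add]; push_cast; ring_nf
  set t : ℝ := (y - x₀) / h with ht
  have htnn : 0 ≤ t := div_nonneg (by linarith) hhpos.le
  set n : ℕ := ⌊t⌋₊ with hn
  have hnle : (n : ℝ) * h ≤ y - x₀ := by
    have := Nat.floor_le htnn
    calc (n : ℝ) * h ≤ t * h := by nlinarith
      _ = y - x₀ := by rw [ht]; field_simp
  have hxy : x₀ + n * h ≤ y := by linarith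
  have hmem : x₀ + (n : ℝ) * h ∈ Set.Ici x₀ := by
    simp only [Set.mem_Ici]; exact le_add_of_nonneg_right (by positivity)
  have h2 : f y ≤ f (x₀ + n * h) := hmono hmem (by simpa using hy) hxy
  have h3 : f y ≤ Real.exp (-(n : ℝ)) * f x₀ := h2.trans (key n)
  have h4 : Real.exp (-(n : ℝ)) ≤ Real.exp (1 - E ^ (-(1 / α)) * (y - x₀)) := by
    apply Real.exp_le_exp.2
    have : t - 1 < (n : ℝ) := Nat.sub_one_lt_floor t
    have hts : E ^ (-(1 / α)) * (y - x₀) = t := by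
      rw [hzeta, ht]; field_simp
    rw [hts]; linarith
  exact h3.trans (mul_le_mul_of_nonneg_right h4 (hf0 x₀ le_rfl))
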